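/- Let 𝓡 = {±1,…,±r}, and for u : ℤ → ℝ finitely supported define ⟨H^a u,u⟩ = Σ_{ξ∈ℤ} Σ_{ρ,ς∈𝓡} V_{ρς} D_ρ u(ξ) D_ς u(ξ) with constant symmetric coefficients V_{ρς} ∈ ℝ. Then there exist constants A ∈ ℝ and c_j ∈ ℝ, j = 1,…,2r−1, such that for all finitely supported u, ⟨H^a u,u⟩ = A·Σ_ξ |D_1 u(ξ)|² + Σ_{j=1}^{2r−1} c_j Σ_ξ |D_1 u(ξ) − D_1 u(ξ−j)|². (Strain-gradient representation of the translation-invariant atomistic hessian.) -/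

import Mathlib

/-- The interaction range `𝓡 = {±1, …, ±r}` as a finset of integers. -/
noncomputable def Rset (r : ℕ) : Finset ℤ := (Finset.Icc (-(r : ℤ)) r).filter (· ≠ 0)

open Function

namespace Stmt13Aux

/-- discrete derivative -/
def Du (u : ℤ → ℝ) (ξ : ℤ) : ℝ := u (ξ + 1) - u ξ

/-- correlation sums of the derivative -/
noncomputable def Tn (u : ℤ → ℝ) (m : ℕ) : ℝ := ∑ᶠ ξ : ℤ, Du u ξ * Du u (ξ + m)

def sg (ρ : ℤ) : ℝ := if 0 < ρ then 1 else -1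
def dd (ρ : ℤ) : ℤ := if 0 < ρ then 0 else ρ

lemma supp_shift {f : ℤ → ℝ} (hf : (support f).Finite) (a : ℤ) :
    (support fun ξ => f (ξ + a)).Finite := by
  have h : (support fun ξ => f (ξ + a)) ⊆ (fun ξ : ℤ => ξ + a) ⁻¹' support f := fun ξ h => h
  exact (hf.preimage (fun x _ y _ h => by omega)).subset h

lemma supp_Du {u : ℤ → ℝ} (hu : (support u).Finite) : (support (Du u)).Finite := by
  refine (((supp_shift hu 1)).union hu).subset ?_
  intro ξ h
  simp only [Du, mem_support] at h
  by_contra hc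
  simp only [Set.mem_union, mem_support, not_or, not_not] at hc
  exact h (by rw [hc.1, hc.2, sub_zero])

lemma supp_DuDu {u : ℤ → ℝ} (hu : (support u).Finite) (a b : ℤ) :
    (support fun ξ => Du u (ξ + a) * Du u (ξ + b)).Finite := by
  refine (supp_shift (supp_Du hu) a).subset ?_
  intro ξ h
  simp only [mem_support] at h ⊢
  exact fun hc => h (by rw [hc, zero_mul])

lemma finsum_shift (f : ℤ → ℝ) (a : ℤ) : ∑ᶠ ξ : ℤ, f (ξ + a) = ∑ᶠ ξ : ℤ, f ξ :=
  finsum_comp_equiv (Equiv.addRight a)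

lemma telescope (u : ℤ → ℝ) (n : ℕ) (ξ : ℤ) :
    u (ξ + n) - u ξ = ∑ i ∈ Finset.range n, Du u (ξ + i) := by
  induction n with
  | zero => simp
  | succ n ih =>
      rw [Finset.sum_range_succ, ← ih, Du]
      push_cast
      ring_nf

lemma Drho (u : ℤ → ℝ) {ρ : ℤ} (hρ : ρ ≠ 0) (ξ : ℤ) :
    u (ξ + ρ) - u ξ = sg ρ * ∑ i ∈ Finset.range ρ.natAbs, Du u (ξ + (dd ρ + i)) := by
  rcases lt_or_gt_of_ne hρ with h | h
  · have h1 : ξ + ρ + (ρ.natAbs : ℤ) = ξ := by omega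
    have := telescope u ρ.natAbs (ξ + ρ)
    rw [h1] at this
    rw [sg, dd, if_neg (by omega), if_neg (by omega), neg_one_mul,
      show (∑ i ∈ Finset.range ρ.natAbs, Du u (ξ + (ρ + (i:ℤ)))) =
        ∑ i ∈ Finset.range ρ.natAbs, Du u (ξ + ρ + (i:ℤ)) from
        Finset.sum_congr rfl fun i _ => by rw [add_assoc], ← this]
    ring
  · have h1 : ξ + (ρ.natAbs : ℤ) = ξ + ρ := by omega
    have := telescope u ρ.natAbs ξ
    rw [h1] at this
    rw [sg, dd, if_pos h, if_pos h, one_mul, this]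
    exact Finset.sum_congr rfl fun i _ => by rw [zero_add]


lemma finsum_const_mul (c : ℝ) (f : ℤ → ℝ) :
    (∑ᶠ ξ : ℤ, c * f ξ) = c * ∑ᶠ ξ : ℤ, f ξ := by
  have := smul_finsum c f
  simpa [smul_eq_mul] using this.symm

lemma cross_le (u : ℤ → ℝ) {a b : ℤ} (hab : a ≤ b) :
    ∑ᶠ ξ : ℤ, Du u (ξ + a) * Du u (ξ + b) = Tn u (b - a).natAbs := by
  have hk : ((b - a).natAbs : ℤ) = b - a := by omega
  rw [Tn, hk, ← finsum_shift (fun ξ => Du u ξ * Du u (ξ + (b - a))) a]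
  exact finsum_congr fun ξ => by rw [show ξ + a + (b - a) = ξ + b by ring]

lemma cross (u : ℤ → ℝ) (a b : ℤ) :
    ∑ᶠ ξ : ℤ, Du u (ξ + a) * Du u (ξ + b) = Tn u (b - a).natAbs := by
  rcases le_total a b with h | h
  · exact cross_le u h
  · rw [show (b - a).natAbs = (a - b).natAbs by omega, ← cross_le u h]
    exact finsum_congr fun ξ => mul_comm _ _

lemma pair {u : ℤ → ℝ} (hu : (support u).Finite) {ρ ς : ℤ} (hρ : ρ ≠ 0) (hς : ς ≠ 0) :
    ∑ᶠ ξ : ℤ, (u (ξ + ρ) - u ξ) * (u (ξ + ς) - u ξ) =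
      sg ρ * sg ς * ∑ p ∈ Finset.range ρ.natAbs ×ˢ Finset.range ς.natAbs,
        Tn u ((dd ς + p.2) - (dd ρ + p.1)).natAbs := by
  have step1 : ∀ ξ : ℤ, (u (ξ + ρ) - u ξ) * (u (ξ + ς) - u ξ) =
      sg ρ * sg ς * ∑ p ∈ Finset.range ρ.natAbs ×ˢ Finset.range ς.natAbs,
        Du u (ξ + (dd ρ + p.1)) * Du u (ξ + (dd ς + p.2)) := by
    intro ξ
    rw [Drho u hρ, Drho u hς]
    rw [show sg ρ * (∑ i ∈ Finset.range ρ.natAbs, Du u (ξ + (dd ρ + (i:ℤ)))) *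
        (sg ς * ∑ i ∈ Finset.range ς.natAbs, Du u (ξ + (dd ς + (i:ℤ)))) =
      sg ρ * sg ς * ((∑ i ∈ Finset.range ρ.natAbs, Du u (ξ + (dd ρ + (i:ℤ)))) *
        (∑ i ∈ Finset.range ς.natAbs, Du u (ξ + (dd ς + (i:ℤ))))) by ring]
    rw [Finset.sum_mul_sum, ← Finset.sum_product']
  calc ∑ᶠ ξ : ℤ, (u (ξ + ρ) - u ξ) * (u (ξ + ς) - u ξ)
      = ∑ᶠ ξ : ℤ, sg ρ * sg ς * ∑ p ∈ Finset.range ρ.natAbs ×ˢ Finset.range ς.natAbs,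
          Du u (ξ + (dd ρ + p.1)) * Du u (ξ + (dd ς + p.2)) := finsum_congr step1
    _ = sg ρ * sg ς * ∑ᶠ ξ : ℤ, ∑ p ∈ Finset.range ρ.natAbs ×ˢ Finset.range ς.natAbs,
          Du u (ξ + (dd ρ + p.1)) * Du u (ξ + (dd ς + p.2)) := by
        exact finsum_const_mul _ _
    _ = sg ρ * sg ς * ∑ p ∈ Finset.range ρ.natAbs ×ˢ Finset.range ς.natAbs,
          ∑ᶠ ξ : ℤ, Du u (ξ + (dd ρ + p.1)) * Du u (ξ + (dd ς + p.2)) := by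
        rw [finsum_sum_comm]
        exact fun p _ => supp_DuDu hu _ _
    _ = sg ρ * sg ς * ∑ p ∈ Finset.range ρ.natAbs ×ˢ Finset.range ς.natAbs,
          Tn u ((dd ς + p.2) - (dd ρ + p.1)).natAbs := by
        rw [Finset.sum_congr rfl fun p _ => cross u (dd ρ + p.1) (dd ς + p.2)]


lemma mem_Rset {r : ℕ} {ρ : ℤ} : ρ ∈ Rset r ↔ -(r:ℤ) ≤ ρ ∧ ρ ≤ r ∧ ρ ≠ 0 := by
  simp [Rset, Finset.mem_filter, Finset.mem_Icc, and_assoc]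

noncomputable def Wc (r : ℕ) (V : ℤ → ℤ → ℝ) (m : ℕ) : ℝ :=
  ∑ ρ ∈ Rset r, ∑ ς ∈ Rset r, V ρ ς * sg ρ * sg ς *
    (((Finset.range ρ.natAbs ×ˢ Finset.range ς.natAbs).filter
      (fun p => ((dd ς + p.2) - (dd ρ + p.1)).natAbs = m)).card : ℝ)

lemma fiber (s : Finset (ℕ × ℕ)) (t : Finset ℕ) (g : ℕ × ℕ → ℕ)
    (h : ∀ p ∈ s, g p ∈ t) (F : ℕ → ℝ) :
    ∑ p ∈ s, F (g p) = ∑ m ∈ t, ((s.filter (fun p => g p = m)).card : ℝ) * F m := by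
  rw [← Finset.sum_fiberwise_of_maps_to' h F]
  exact Finset.sum_congr rfl fun m _ => by rw [Finset.sum_const, nsmul_eq_mul]

lemma hkey {r : ℕ} {ρ ς : ℤ} (hρ : ρ ∈ Rset r) (hς : ς ∈ Rset r)
    {p : ℕ × ℕ} (hp : p ∈ Finset.range ρ.natAbs ×ˢ Finset.range ς.natAbs) :
    ((dd ς + p.2) - (dd ρ + p.1)).natAbs ∈ Finset.range (2 * r) := by
  rw [mem_Rset] at hρ hς
  simp only [Finset.mem_product, Finset.mem_range] at hp
  simp only [Finset.mem_range, dd]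
  split_ifs <;> omega

lemma supp_Drho {u : ℤ → ℝ} (hu : (support u).Finite) (ρ : ℤ) :
    (support fun ξ => u (ξ + ρ) - u ξ).Finite := by
  refine (((supp_shift hu ρ)).union hu).subset ?_
  intro ξ h
  simp only [mem_support] at h
  by_contra hc
  simp only [Set.mem_union, mem_support, not_or, not_not] at hc
  exact h (by rw [hc.1, hc.2, sub_zero])

lemma supp_sum {s : Finset ℤ} {f : ℤ → ℤ → ℝ}
    (h : ∀ ς ∈ s, (support fun ξ => f ς ξ).Finite) :
    (support fun ξ => ∑ ς ∈ s, f ς ξ).Finite := by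
  classical
  refine Set.Finite.subset (Set.Finite.biUnion s.finite_toSet h) ?_
  intro ξ hξ
  simp only [mem_support] at hξ
  by_contra hc
  simp only [Set.mem_iUnion, mem_support, not_exists, not_not] at hc
  exact hξ (Finset.sum_eq_zero fun ς hs => hc ς hs)

lemma LHSval (r : ℕ) (V : ℤ → ℤ → ℝ) {u : ℤ → ℝ} (hu : (support u).Finite) :
    (∑ᶠ ξ : ℤ, ∑ ρ ∈ Rset r, ∑ ς ∈ Rset r,
        V ρ ς * (u (ξ + ρ) - u ξ) * (u (ξ + ς) - u ξ)) =
      ∑ m ∈ Finset.range (2 * r), Wc r V m * Tn u m := by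
  have hsupp1 : ∀ ρ ς : ℤ,
      (support fun ξ => V ρ ς * (u (ξ + ρ) - u ξ) * (u (ξ + ς) - u ξ)).Finite := by
    intro ρ ς
    refine (supp_Drho hu ρ).subset ?_
    intro ξ h
    simp only [mem_support] at h ⊢
    intro hc
    exact h (by rw [hc, mul_zero, zero_mul])
  calc (∑ᶠ ξ : ℤ, ∑ ρ ∈ Rset r, ∑ ς ∈ Rset r,
        V ρ ς * (u (ξ + ρ) - u ξ) * (u (ξ + ς) - u ξ))
      = ∑ ρ ∈ Rset r, ∑ᶠ ξ : ℤ, ∑ ς ∈ Rset r,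
          V ρ ς * (u (ξ + ρ) - u ξ) * (u (ξ + ς) - u ξ) :=
        finsum_sum_comm _ _ (fun ρ _ => supp_sum (fun ς _ => hsupp1 ρ ς))
    _ = ∑ ρ ∈ Rset r, ∑ ς ∈ Rset r, ∑ᶠ ξ : ℤ,
          V ρ ς * (u (ξ + ρ) - u ξ) * (u (ξ + ς) - u ξ) :=
        Finset.sum_congr rfl fun ρ _ => finsum_sum_comm _ _ (fun ς _ => hsupp1 ρ ς)
    _ = ∑ ρ ∈ Rset r, ∑ ς ∈ Rset r, V ρ ς *
          ∑ᶠ ξ : ℤ, (u (ξ + ρ) - u ξ) * (u (ξ + ς) - u ξ) := by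
        refine Finset.sum_congr rfl fun ρ _ => Finset.sum_congr rfl fun ς _ => ?_
        rw [← finsum_const_mul]
        exact finsum_congr fun ξ => (mul_assoc _ _ _)
    _ = ∑ ρ ∈ Rset r, ∑ ς ∈ Rset r, V ρ ς *
          (sg ρ * sg ς * ∑ p ∈ Finset.range ρ.natAbs ×ˢ Finset.range ς.natAbs,
            Tn u ((dd ς + p.2) - (dd ρ + p.1)).natAbs) := by
        refine Finset.sum_congr rfl fun ρ hρ => Finset.sum_congr rfl fun ς hς => ?_
        rw [pair hu (mem_Rset.1 hρ).2.2 (mem_Rset.1 hς).2.2]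
    _ = ∑ ρ ∈ Rset r, ∑ ς ∈ Rset r, V ρ ς *
          (sg ρ * sg ς * ∑ m ∈ Finset.range (2 * r),
            (((Finset.range ρ.natAbs ×ˢ Finset.range ς.natAbs).filter
              (fun p => ((dd ς + p.2) - (dd ρ + p.1)).natAbs = m)).card : ℝ) * Tn u m) := by
        refine Finset.sum_congr rfl fun ρ hρ => Finset.sum_congr rfl fun ς hς => ?_
        rw [fiber _ _ _ (fun p hp => hkey hρ hς hp)]
    _ = ∑ ρ ∈ Rset r, ∑ ς ∈ Rset r, ∑ m ∈ Finset.range (2 * r),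
          (V ρ ς * sg ρ * sg ς *
            (((Finset.range ρ.natAbs ×ˢ Finset.range ς.natAbs).filter
              (fun p => ((dd ς + p.2) - (dd ρ + p.1)).natAbs = m)).card : ℝ)) * Tn u m := by
        refine Finset.sum_congr rfl fun ρ _ => Finset.sum_congr rfl fun ς _ => ?_
        rw [Finset.mul_sum, Finset.mul_sum]
        exact Finset.sum_congr rfl fun m _ => by ring
    _ = ∑ m ∈ Finset.range (2 * r), Wc r V m * Tn u m := by
        rw [Finset.sum_congr rfl fun (ρ : ℤ) _ => Finset.sum_comm, Finset.sum_comm]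
        refine Finset.sum_congr rfl fun m _ => ?_
        rw [Wc, Finset.sum_mul]
        exact Finset.sum_congr rfl fun ρ _ => by rw [Finset.sum_mul]


lemma sum_sq (u : ℤ → ℝ) : (∑ᶠ ξ : ℤ, (u (ξ + 1) - u ξ) ^ 2) = Tn u 0 := by
  rw [Tn]
  exact finsum_congr fun ξ => by
    rw [show ((0:ℕ):ℤ) = 0 from rfl, add_zero, Du]; ring

lemma diff_sq {u : ℤ → ℝ} (hu : (support u).Finite) (j : ℕ) :
    (∑ᶠ ξ : ℤ, ((u (ξ + 1) - u ξ) - (u (ξ - (j:ℤ) + 1) - u (ξ - (j:ℤ)))) ^ 2)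
      = 2 * Tn u 0 - 2 * Tn u j := by
  have hA := supp_DuDu hu 0 0
  have hB := supp_DuDu hu (-(j:ℤ)) (-(j:ℤ))
  have hC := supp_DuDu hu 0 (-(j:ℤ))
  have hC2 : (support fun ξ : ℤ => 2 * (Du u (ξ + 0) * Du u (ξ + (-(j:ℤ))))).Finite := by
    refine hC.subset ?_
    intro ξ h
    simp only [mem_support] at h ⊢
    exact fun hc => h (by rw [hc, mul_zero])
  have hAB : (support fun ξ : ℤ =>
      Du u (ξ + 0) * Du u (ξ + 0) + Du u (ξ + (-(j:ℤ))) * Du u (ξ + (-(j:ℤ)))).Finite := by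
    refine (hA.union hB).subset ?_
    intro ξ h
    simp only [mem_support] at h
    by_contra hc
    simp only [Set.mem_union, mem_support, not_or, not_not] at hc
    exact h (by rw [hc.1, hc.2, add_zero])
  calc (∑ᶠ ξ : ℤ, ((u (ξ + 1) - u ξ) - (u (ξ - (j:ℤ) + 1) - u (ξ - (j:ℤ)))) ^ 2)
      = ∑ᶠ ξ : ℤ, ((Du u (ξ + 0) * Du u (ξ + 0) + Du u (ξ + (-(j:ℤ))) * Du u (ξ + (-(j:ℤ))))
          - 2 * (Du u (ξ + 0) * Du u (ξ + (-(j:ℤ))))) := by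
        refine finsum_congr fun ξ => ?_
        simp only [Du, add_zero]
        rw [show ξ + -(j:ℤ) = ξ - j by ring]
        ring
    _ = (∑ᶠ ξ : ℤ, (Du u (ξ + 0) * Du u (ξ + 0) + Du u (ξ + (-(j:ℤ))) * Du u (ξ + (-(j:ℤ)))))
        - ∑ᶠ ξ : ℤ, 2 * (Du u (ξ + 0) * Du u (ξ + (-(j:ℤ)))) :=
        finsum_sub_distrib hAB hC2
    _ = 2 * Tn u 0 - 2 * Tn u j := by
        rw [finsum_add_distrib hA hB, finsum_const_mul, cross u 0 0,
          cross u (-(j:ℤ)) (-(j:ℤ)), cross u 0 (-(j:ℤ))]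
        norm_num
        ring

end Stmt13Aux

open Stmt13Aux

/-- strain-gradient representation of the translation-invariant
atomistic hessian: `⟨H^a u,u⟩ = A Σ|D_1 u|² + Σ_{j=1}^{2r−1} c_j Σ |D_1u(ξ) − D_1u(ξ−j)|²`. -/
theorem stmt13 (r : ℕ) (V : ℤ → ℤ → ℝ) (hsymm : ∀ ρ ς, V ρ ς = V ς ρ) :
    ∃ A : ℝ, ∃ c : ℕ → ℝ, ∀ u : ℤ → ℝ, (Function.support u).Finite →
      (∑ᶠ ξ : ℤ, ∑ ρ ∈ Rset r, ∑ ς ∈ Rset r,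
          V ρ ς * (u (ξ + ρ) - u ξ) * (u (ξ + ς) - u ξ)) =
        A * (∑ᶠ ξ : ℤ, (u (ξ + 1) - u ξ) ^ 2) +
          ∑ j ∈ Finset.Icc 1 (2 * r - 1), c j *
            ∑ᶠ ξ : ℤ, ((u (ξ + 1) - u ξ) - (u (ξ - (j : ℤ) + 1) - u (ξ - (j : ℤ)))) ^ 2 := by
  classical
  refine ⟨Wc r V 0 + ∑ j ∈ Finset.Icc 1 (2 * r - 1), Wc r V j,
    fun j => -(Wc r V j) / 2, fun u hu => ?_⟩
  have h2 : (∑ j ∈ Finset.Icc 1 (2 * r - 1), -Wc r V j / 2 *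
        ∑ᶠ ξ : ℤ, ((u (ξ + 1) - u ξ) - (u (ξ - (j:ℤ) + 1) - u (ξ - (j:ℤ)))) ^ 2)
      = (∑ j ∈ Finset.Icc 1 (2 * r - 1), Wc r V j * Tn u j)
        - ∑ j ∈ Finset.Icc 1 (2 * r - 1), Wc r V j * Tn u 0 := by
    rw [← Finset.sum_sub_distrib]
    refine Finset.sum_congr rfl fun j _ => ?_
    rw [diff_sq hu j]; ring
  have hsplit : ∑ m ∈ Finset.range (2 * r), Wc r V m * Tn u m
      = Wc r V 0 * Tn u 0 + ∑ j ∈ Finset.Icc 1 (2 * r - 1), Wc r V j * Tn u j := by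
    rcases Nat.eq_zero_or_pos r with h | h
    · subst h
      have hR : Rset 0 = ∅ := by ext x; simp [Rset]
      have hW : Wc 0 V 0 = 0 := by simp [Wc, hR]
      simp [hW]
    · rw [show Finset.range (2 * r) = insert 0 (Finset.Icc 1 (2 * r - 1)) from by
        ext x; simp; omega, Finset.sum_insert (by simp)]
  rw [LHSval r V hu, sum_sq u, hsplit]
  beta_reduce
  rw [h2, add_mul, Finset.sum_mul]
  ring
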